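/- For every nonzero a ∈ g_{−1}, the family (p^a_j)_{j∈ℤ} satisfies ⁅p^a_i, p^a_j⁆ ⊆ p^a_{i+j} for all i, j ∈ ℤ, so that p^a = ⊕_{j∈ℤ} p^a_j is a parabolic subalgebra of g containing a; moreover, p^a is minimal with this property: for every parabolic subalgebra p = ⊕_j p_j of g with a ∈ p_{−1}, one has p^a_j ⊆ p_j for all j ∈ ℤ. -/

import Mathlib

variable {g : Type*} [LieRing g] [LieAlgebra ℂ g]

/-- `p^a_{−1}`: the span of all iterated brackets `(ad c_r)⋯(ad c_1)(a)` with
`c_1, …, c_r ∈ g_0` (the empty list giving `a` itself). -/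
noncomputable def paNegOne (G : ℤ → Submodule ℂ g) (a : g) : Submodule ℂ g :=
  Submodule.span ℂ
    {x | ∃ l : List g, (∀ c ∈ l, c ∈ G 0) ∧ x = l.foldr (fun c y => ⁅c, y⁆) a}

/-- `paNegK G a m = p^a_{−(m+1)}`: inductively, `p^a_{−k−1} = span ⁅p^a_{−1}, p^a_{−k}⁆`. -/
noncomputable def paNegK (G : ℤ → Submodule ℂ g) (a : g) : ℕ → Submodule ℂ g
  | 0 => paNegOne G a
  | m + 1 => Submodule.span ℂ
      {z | ∃ x ∈ paNegOne G a, ∃ y ∈ paNegK G a m, z = ⁅x, y⁆}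

/-- The family `p^a_j`: equal to `g_j` for `j ≥ 0` and to `p^a_{−k}` for `j = −k < 0`. -/
noncomputable def pa (G : ℤ → Submodule ℂ g) (a : g) (j : ℤ) : Submodule ℂ g :=
  if 0 ≤ j then G j else paNegK G a ((-j).toNat - 1)

lemma pa_of_nonneg (G : ℤ → Submodule ℂ g) (a : g) {j : ℤ} (h : 0 ≤ j) :
    pa G a j = G j := by rw [pa, if_pos h]

lemma pa_neg (G : ℤ → Submodule ℂ g) (a : g) (k : ℕ) :
    pa G a (-((k : ℤ) + 1)) = paNegK G a k := by
  have h1 : ¬ (0 ≤ -((k : ℤ) + 1)) := by omega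
  rw [pa, if_neg h1]
  congr 1

lemma neg_form {j : ℤ} (h : j < 0) : ∃ k : ℕ, j = -((k : ℤ) + 1) :=
  ⟨(-j).toNat - 1, by omega⟩

lemma a_mem_paNegOne (G : ℤ → Submodule ℂ g) (a : g) : a ∈ paNegOne G a :=
  Submodule.subset_span ⟨[], by simp, rfl⟩

lemma paNegOne_le (G : ℤ → Submodule ℂ g)
    (hgrade : ∀ i j : ℤ, ∀ x ∈ G i, ∀ y ∈ G j, ⁅x, y⁆ ∈ G (i + j))
    (a : g) (ha : a ∈ G (-1)) : paNegOne G a ≤ G (-1) := by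
  rw [paNegOne, Submodule.span_le]
  rintro x ⟨l, hl, rfl⟩
  revert hl
  induction l with
  | nil => exact fun _ => ha
  | cons c t ih =>
    intro hl
    have h := hgrade 0 (-1) c (hl c (by simp)) _ (ih (fun d hd => hl d (by simp [hd])))
    simpa using h

lemma g0_lie_paNegOne (G : ℤ → Submodule ℂ g) (a : g) {c : g} (hc : c ∈ G 0)
    {x : g} (hx : x ∈ paNegOne G a) : ⁅c, x⁆ ∈ paNegOne G a := by
  have h : paNegOne G a ≤ (paNegOne G a).comap (LieAlgebra.ad ℂ g c) := by
    rw [paNegOne, Submodule.span_le]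
    rintro y ⟨l, hl, rfl⟩
    simp only [SetLike.mem_coe, Submodule.mem_comap, LieAlgebra.ad_apply]
    refine Submodule.subset_span ⟨c :: l, ?_, rfl⟩
    intro d hd
    rcases List.mem_cons.mp hd with h | h
    · exact h ▸ hc
    · exact hl d h
  simpa [Submodule.mem_comap, LieAlgebra.ad_apply] using h hx

lemma paNegK_le (G : ℤ → Submodule ℂ g)
    (hgrade : ∀ i j : ℤ, ∀ x ∈ G i, ∀ y ∈ G j, ⁅x, y⁆ ∈ G (i + j))
    (a : g) (ha : a ∈ G (-1)) : ∀ m : ℕ, paNegK G a m ≤ G (-((m : ℤ) + 1)) := by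
  intro m
  induction m with
  | zero => simpa [paNegK] using paNegOne_le G hgrade a ha
  | succ m ih =>
    rw [paNegK, Submodule.span_le]
    rintro _ ⟨x, hx, y, hy, rfl⟩
    have h := hgrade (-1) (-((m : ℤ) + 1)) x (paNegOne_le G hgrade a ha hx) y (ih hy)
    have e : (-1 : ℤ) + (-((m : ℤ) + 1)) = -(((m + 1 : ℕ) : ℤ) + 1) := by push_cast; ring
    rwa [e] at h

lemma lemB (G : ℤ → Submodule ℂ g) (a : g) :
    ∀ k m : ℕ, ∀ x ∈ paNegK G a k, ∀ y ∈ paNegK G a m,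
      ⁅x, y⁆ ∈ paNegK G a (k + m + 1) := by
  intro k
  induction k with
  | zero =>
    intro m x hx y hy
    have : paNegK G a (0 + m + 1) = paNegK G a (m + 1) := by norm_num
    rw [this, paNegK]
    exact Submodule.subset_span ⟨x, hx, y, hy, rfl⟩
  | succ k ih =>
    intro m x hx y hy
    have h : paNegK G a (k + 1) ≤
        (paNegK G a (k + 1 + m + 1)).comap (LieAlgebra.ad ℂ g y) := by
      rw [paNegK, Submodule.span_le]
      rintro _ ⟨u, hu, v, hv, rfl⟩
      simp only [SetLike.mem_coe, Submodule.mem_comap, LieAlgebra.ad_apply]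
      have e : ⁅y, ⁅u, v⁆⁆ = -(⁅u, ⁅v, y⁆⁆ - ⁅v, ⁅u, y⁆⁆) := by
        rw [← lie_lie]
        exact neg_eq_iff_eq_neg.mp (lie_skew ⁅u, v⁆ y)
      rw [e]
      apply neg_mem
      apply sub_mem
      · -- ⁅u, ⁅v,y⁆⁆ : ⁅v,y⁆ ∈ paNegK (k+m+1), u ∈ paNegOne
        have h1 : ⁅v, y⁆ ∈ paNegK G a (k + m + 1) := ih m v hv y hy
        have : paNegK G a (k + 1 + m + 1) = paNegK G a ((k + m + 1) + 1) := by
          congr 1; omega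
        rw [this, paNegK]
        exact Submodule.subset_span ⟨u, hu, _, h1, rfl⟩
      · -- ⁅v, ⁅u,y⁆⁆ : ⁅u,y⁆ ∈ paNegK (m+1), then ih
        have h1 : ⁅u, y⁆ ∈ paNegK G a (m + 1) := by
          rw [paNegK]; exact Submodule.subset_span ⟨u, hu, y, hy, rfl⟩
        have h2 := ih (m + 1) v hv _ h1
        have : paNegK G a (k + 1 + m + 1) = paNegK G a (k + (m + 1) + 1) := by
          congr 1; omega
        rw [this]; exact h2
    have := h hx
    simp only [Submodule.mem_comap, LieAlgebra.ad_apply] at this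
    have e : ⁅x, y⁆ = -⁅y, x⁆ := by rw [← lie_skew]
    rw [e]
    exact neg_mem this

lemma lemA (G : ℤ → Submodule ℂ g)
    (hgrade : ∀ i j : ℤ, ∀ x ∈ G i, ∀ y ∈ G j, ⁅x, y⁆ ∈ G (i + j))
    (a : g) (ha : a ∈ G (-1)) :
    ∀ m : ℕ, ∀ i : ℤ, 0 ≤ i → ∀ c ∈ G i, ∀ y ∈ paNegK G a m,
      ⁅c, y⁆ ∈ pa G a (i - ((m : ℤ) + 1)) := by
  intro m
  induction m with
  | zero =>
    intro i hi c hc y hy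
    rcases hi.lt_or_eq with h0 | h0
    · -- 0 < i : lands in G (i - 1)
      have hy' : y ∈ G (-1) := paNegOne_le G hgrade a ha hy
      have h := hgrade i (-1) c hc y hy'
      have e : i + (-1) = i - ((0 : ℕ) + 1 : ℤ) := by omega
      rw [e] at h
      rw [pa_of_nonneg G a (by omega)]
      exact h
    · -- i = 0
      have e : (0 : ℤ) - ((0 : ℕ) + 1 : ℤ) = -((0 : ℕ) + 1 : ℤ) := by omega
      rw [← h0, e, pa_neg]
      rw [← h0] at hc
      exact g0_lie_paNegOne G a hc hy
  | succ m ih =>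
    intro i hi c hc y hy
    have key : paNegK G a (m + 1) ≤
        (pa G a (i - (((m + 1 : ℕ) : ℤ) + 1))).comap (LieAlgebra.ad ℂ g c) := by
      rw [paNegK, Submodule.span_le]
      rintro _ ⟨x, hx, z, hz, rfl⟩
      simp only [SetLike.mem_coe, Submodule.mem_comap, LieAlgebra.ad_apply]
      rw [leibniz_lie]
      apply add_mem
      · -- ⁅⁅c, x⁆, z⁆
        rcases hi.lt_or_eq with h0 | h0
        · -- 0 < i : ⁅c,x⁆ ∈ G (i-1), use ih
          have hcx : ⁅c, x⁆ ∈ G (i - 1) := by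
            have h := hgrade i (-1) c hc x (paNegOne_le G hgrade a ha hx)
            have e : i + (-1) = i - 1 := by ring
            rwa [e] at h
          have h := ih (i - 1) (by omega) _ hcx z hz
          have e : i - 1 - ((m : ℤ) + 1) = i - (((m + 1 : ℕ) : ℤ) + 1) := by push_cast; ring
          rwa [e] at h
        · -- i = 0 : ⁅c,x⁆ ∈ paNegOne
          have hcx : ⁅c, x⁆ ∈ paNegOne G a := by
            rw [← h0] at hc; exact g0_lie_paNegOne G a hc hx
          have h : ⁅⁅c, x⁆, z⁆ ∈ paNegK G a (m + 1) := by
            rw [paNegK]; exact Submodule.subset_span ⟨_, hcx, _, hz, rfl⟩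
          have e : i - (((m + 1 : ℕ) : ℤ) + 1) = -(((m + 1 : ℕ) : ℤ) + 1) := by
            rw [← h0]; push_cast; ring
          rw [e, pa_neg]
          exact h
      · -- ⁅x, ⁅c, z⁆⁆
        have hcz := ih i hi c hc z hz
        set t : ℤ := i - ((m : ℤ) + 1) with ht
        rcases lt_trichotomy t 0 with h0 | h0 | h0
        · -- t < 0 : ⁅c,z⁆ ∈ paNegK r, bracket with paNegOne goes one lower
          obtain ⟨r, hr⟩ := neg_form h0
          rw [hr, pa_neg] at hcz
          have h : ⁅x, ⁅c, z⁆⁆ ∈ paNegK G a (r + 1) := by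
            rw [paNegK]; exact Submodule.subset_span ⟨_, hx, _, hcz, rfl⟩
          have e : i - (((m + 1 : ℕ) : ℤ) + 1) = -(((r + 1 : ℕ) : ℤ) + 1) := by
            push_cast; omega
          rw [e, pa_neg]
          exact h
        · -- t = 0 : ⁅c,z⁆ ∈ G 0
          rw [pa_of_nonneg G a h0.ge, h0] at hcz
          have h : ⁅x, ⁅c, z⁆⁆ ∈ paNegOne G a := by
            have h1 : ⁅⁅c, z⁆, x⁆ ∈ paNegOne G a := g0_lie_paNegOne G a hcz hx
            have e : ⁅x, ⁅c, z⁆⁆ = -⁅⁅c, z⁆, x⁆ := neg_eq_iff_eq_neg.mp (lie_skew _ _)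
            rw [e]; exact neg_mem h1
          have e : i - (((m + 1 : ℕ) : ℤ) + 1) = -(((0 : ℕ) : ℤ) + 1) := by
            push_cast; omega
          rw [e, pa_neg]
          exact h
        · -- t > 0 : ⁅c,z⁆ ∈ G t, bracket lands in G (t - 1), t - 1 ≥ 0
          rw [pa_of_nonneg G a h0.le] at hcz
          have h := hgrade (-1) t x (paNegOne_le G hgrade a ha hx) _ hcz
          have e : (-1 : ℤ) + t = i - (((m + 1 : ℕ) : ℤ) + 1) := by push_cast; omega
          rw [e] at h
          rw [pa_of_nonneg G a (by push_cast; omega)]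
          exact h
    have := key hy
    simpa only [Submodule.mem_comap, LieAlgebra.ad_apply] using this

lemma paNegOne_min (G : ℤ → Submodule ℂ g) (a : g)
    (p : ℤ → Submodule ℂ g)
    (hpbr : ∀ i j : ℤ, ∀ x ∈ p i, ∀ y ∈ p j, ⁅x, y⁆ ∈ p (i + j))
    (hppos : ∀ j : ℤ, 0 ≤ j → p j = G j)
    (hpa : a ∈ p (-1)) : paNegOne G a ≤ p (-1) := by
  rw [paNegOne, Submodule.span_le]
  rintro x ⟨l, hl, rfl⟩
  revert hl
  induction l with
  | nil => exact fun _ => hpa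
  | cons c t ih =>
    intro hl
    have hc : c ∈ p 0 := by rw [hppos 0 le_rfl]; exact hl c (by simp)
    have h := hpbr 0 (-1) c hc _ (ih (fun d hd => hl d (by simp [hd])))
    simpa using h

lemma paNegK_min (G : ℤ → Submodule ℂ g) (a : g)
    (p : ℤ → Submodule ℂ g)
    (hpbr : ∀ i j : ℤ, ∀ x ∈ p i, ∀ y ∈ p j, ⁅x, y⁆ ∈ p (i + j))
    (hppos : ∀ j : ℤ, 0 ≤ j → p j = G j)
    (hpa : a ∈ p (-1)) : ∀ m : ℕ, paNegK G a m ≤ p (-((m : ℤ) + 1)) := by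
  intro m
  induction m with
  | zero => simpa [paNegK] using paNegOne_min G a p hpbr hppos hpa
  | succ m ih =>
    rw [paNegK, Submodule.span_le]
    rintro _ ⟨x, hx, y, hy, rfl⟩
    have h := hpbr (-1) (-((m : ℤ) + 1)) x (paNegOne_min G a p hpbr hppos hpa hx) y (ih hy)
    have e : (-1 : ℤ) + (-((m : ℤ) + 1)) = -(((m + 1 : ℕ) : ℤ) + 1) := by push_cast; ring
    rwa [e] at h

/-- Lemma 2.2 a: `p^a` is a parabolic subalgebra containing `a`, and it
is the minimal one among parabolic subalgebras `p` with `a ∈ p_{−1}`. -/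
theorem stmt1 {g : Type*} [LieRing g] [LieAlgebra ℂ g]
    (G : ℤ → Submodule ℂ g)
    (hdirect : DirectSum.IsInternal G)
    (hgrade : ∀ i j : ℤ, ∀ x ∈ G i, ∀ y ∈ G j, ⁅x, y⁆ ∈ G (i + j))
    (hP1 : ∀ x ∈ G 0, ∀ y ∈ G 0, ⁅x, y⁆ = 0)
    (hP2 : ∀ k : ℤ, 0 < k → ∀ b ∈ G (-k), (∀ x ∈ G 1, ⁅b, x⁆ = 0) → b = 0)
    (a : g) (ha : a ∈ G (-1)) (ha0 : a ≠ 0) :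
    (∀ i j : ℤ, ∀ x ∈ pa G a i, ∀ y ∈ pa G a j, ⁅x, y⁆ ∈ pa G a (i + j))
    ∧ (∀ j : ℤ, pa G a j ≤ G j)
    ∧ (∀ j : ℤ, 0 ≤ j → pa G a j = G j)
    ∧ a ∈ pa G a (-1)
    ∧ (∃ j : ℤ, j < 0 ∧ pa G a j ≠ ⊥)
    ∧ (∀ p : ℤ → Submodule ℂ g, (∀ j : ℤ, p j ≤ G j) →
        (∀ i j : ℤ, ∀ x ∈ p i, ∀ y ∈ p j, ⁅x, y⁆ ∈ p (i + j)) →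
        (∀ j : ℤ, 0 ≤ j → p j = G j) →
        (∃ j : ℤ, j < 0 ∧ p j ≠ ⊥) →
        a ∈ p (-1) →
        ∀ j : ℤ, pa G a j ≤ p j) := by
  have hamem : a ∈ pa G a (-1) := by
    have e : (-1 : ℤ) = -(((0 : ℕ) : ℤ) + 1) := by omega
    rw [e, pa_neg]
    exact a_mem_paNegOne G a
  refine ⟨?_, ?_, fun j hj => pa_of_nonneg G a hj, hamem, ?_, ?_⟩
  · -- bracket closure
    intro i j x hx y hy
    rcases le_or_gt 0 i with hi | hi
    · rcases le_or_gt 0 j with hj | hj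
      · -- both nonneg
        rw [pa_of_nonneg G a hi] at hx
        rw [pa_of_nonneg G a hj] at hy
        rw [pa_of_nonneg G a (by omega)]
        exact hgrade i j x hx y hy
      · -- i ≥ 0, j < 0
        obtain ⟨m, rfl⟩ := neg_form hj
        rw [pa_of_nonneg G a hi] at hx
        rw [pa_neg] at hy
        have h := lemA G hgrade a ha m i hi x hx y hy
        have e : i - ((m : ℤ) + 1) = i + -((m : ℤ) + 1) := by ring
        rwa [e] at h
    · rcases le_or_gt 0 j with hj | hj
      · -- i < 0, j ≥ 0
        obtain ⟨m, rfl⟩ := neg_form hi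
        rw [pa_neg] at hx
        rw [pa_of_nonneg G a hj] at hy
        have h := lemA G hgrade a ha m j hj y hy x hx
        have e : j - ((m : ℤ) + 1) = -((m : ℤ) + 1) + j := by ring
        rw [e] at h
        have e2 : ⁅x, y⁆ = -⁅y, x⁆ := neg_eq_iff_eq_neg.mp (lie_skew _ _)
        rw [e2]
        exact neg_mem h
      · -- both negative
        obtain ⟨k, rfl⟩ := neg_form hi
        obtain ⟨m, rfl⟩ := neg_form hj
        rw [pa_neg] at hx hy
        have h := lemB G a k m x hx y hy
        have e : -((k : ℤ) + 1) + -((m : ℤ) + 1) = -(((k + m + 1 : ℕ) : ℤ) + 1) := by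
          push_cast; ring
        rw [e, pa_neg]
        exact h
  · -- pa ≤ G
    intro j
    rcases le_or_gt 0 j with hj | hj
    · rw [pa_of_nonneg G a hj]
    · obtain ⟨m, rfl⟩ := neg_form hj
      rw [pa_neg]
      exact paNegK_le G hgrade a ha m
  · -- nontrivial in negative degree
    refine ⟨-1, by omega, ?_⟩
    intro hbot
    rw [hbot] at hamem
    exact ha0 (Submodule.mem_bot ℂ |>.mp hamem)
  · -- minimality
    intro p hple hpbr hppos hpne hpa j
    rcases le_or_gt 0 j with hj | hj
    · rw [pa_of_nonneg G a hj, hppos j hj]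
    · obtain ⟨m, rfl⟩ := neg_form hj
      rw [pa_neg]
      exact paNegK_min G a p hpbr hppos hpa m
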